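/- Let (i₁,t₁,S₁) and (i₂,t₂,S₂) be vine curve triples and k₁, k₂ ∈ ℤ. If H(i₁,t₁,S₁;k₁) = H(i₂,t₂,S₂;k₂) (as subsets of W), then S₁ = S₂. -/

import Mathlib

namespace Paper

/-- A vine curve triple `(i,t,S)` for genus `g` and `n` markings
(markings are `{1,…,n}` and `S` always contains the first marking `1`). -/
def VineTriple (g n i t : ℕ) (S : Finset ℕ) : Prop :=
  i ≤ g ∧ 1 ≤ t ∧ i + t ≤ g + 1 ∧ S ⊆ Finset.Icc 1 n ∧ 1 ∈ S ∧
  ((i = 0 ∧ t = 1) → 2 ≤ S.card) ∧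
  ((i = 0 ∧ t = 2) → 1 ≤ S.card) ∧
  ((i = g ∧ t = 1) → 2 ≤ (Finset.Icc 1 n \ S).card) ∧
  ((i = g - 1 ∧ t = 2) → 1 ≤ (Finset.Icc 1 n \ S).card)

/-- The stability hyperplane `H(i,t,S;k)` inside the space `W` with
coordinates `x(i,S)` (for divisorial vine triples) and `y j` (for markings):
for `t = 1` it is `{x(i,S) = k + 1/2}`, and for `t ≥ 2` it is the affine
hyperplane from equation (walls2) of the paper. -/
noncomputable def Hyp (g n : ℕ) (d : ℤ) (i t : ℕ) (S : Finset ℕ) (k : ℤ) :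
    Set (((ℕ × Finset ℕ) → ℝ) × (ℕ → ℝ)) :=
  if t = 1 then
    {w | w.1 (i, S) = (k : ℝ) + 1 / 2}
  else
    {w | ((2 * (g : ℝ) - 2 * (i : ℝ) - (t : ℝ)) / (2 * (g : ℝ) - 2)) *
          (∑ j ∈ S, w.2 j) +
        ((2 * (i : ℝ) - 2 + (t : ℝ)) / (2 * (g : ℝ) - 2)) *
          ((d : ℝ) - ∑ j ∈ Finset.Icc 1 n \ S, w.2 j) =
        (k : ℝ) + (t : ℝ) / 2}

lemma sum_pair (T : Finset ℕ) (a b : ℝ) (p q : ℕ) :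
    ∑ m ∈ T, ((if m = p then a else 0) + (if m = q then b else 0))
      = (if p ∈ T then a else 0) + (if q ∈ T then b else 0) := by
  rw [Finset.sum_add_distrib,
    Finset.sum_ite_eq' T p (fun _ => a), Finset.sum_ite_eq' T q (fun _ => b)]

lemma hG_ne (g : ℕ) (hg : 2 ≤ g) : (2 * (g : ℝ) - 2) ≠ 0 := by
  have : (2 : ℝ) ≤ (g : ℝ) := by exact_mod_cast hg
  nlinarith

/-- Key helper for the `t ≥ 2, t ≥ 2` case. -/
lemma key (g n : ℕ) (d : ℤ) (hg : 2 ≤ g) (i₁ t₁ i₂ t₂ : ℕ) (S₁ S₂ : Finset ℕ)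
    (k₁ k₂ : ℤ) (ht₁ : t₁ ≠ 1) (ht₂ : t₂ ≠ 1) (h1S₁ : 1 ∈ S₁) (h1S₂ : 1 ∈ S₂)
    (hH : Hyp g n d i₁ t₁ S₁ k₁ = Hyp g n d i₂ t₂ S₂ k₂)
    (j : ℕ) (hjI : j ∈ Finset.Icc 1 n) (hj1 : j ∈ S₁) (hj2 : j ∉ S₂) : False := by
  have hG := hG_ne g hg
  have hj : j ≠ 1 := fun h => hj2 (h ▸ h1S₂)
  set s : ℝ := ((k₂ : ℝ) + (t₂ : ℝ) / 2)
      - ((2 * (i₂ : ℝ) - 2 + (t₂ : ℝ)) / (2 * (g : ℝ) - 2)) * (d : ℝ) with hs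
  set y : ℕ → ℝ := fun m => (if m = 1 then s else 0) + (if m = j then -s else 0) with hy
  set y' : ℕ → ℝ :=
    fun m => (if m = 1 then s - 1 else 0) + (if m = j then 1 - s else 0) with hy'
  have hS2 : ∑ m ∈ S₂, y m = s := by
    rw [hy, sum_pair]; simp [h1S₂, hj2]
  have hS2c : ∑ m ∈ Finset.Icc 1 n \ S₂, y m = -s := by
    rw [hy, sum_pair]; simp [Finset.mem_sdiff, h1S₂, hj2, hjI]
  have hS1 : ∑ m ∈ S₁, y m = 0 := by
    rw [hy, sum_pair]; simp [h1S₁, hj1]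
  have hS1c : ∑ m ∈ Finset.Icc 1 n \ S₁, y m = 0 := by
    rw [hy, sum_pair]; simp [Finset.mem_sdiff, h1S₁, hj1]
  have hS1' : ∑ m ∈ S₁, y' m = 0 := by
    rw [hy', sum_pair]; simp [h1S₁, hj1]
  have hS1c' : ∑ m ∈ Finset.Icc 1 n \ S₁, y' m = 0 := by
    rw [hy', sum_pair]; simp [Finset.mem_sdiff, h1S₁, hj1]
  have hS2' : ∑ m ∈ S₂, y' m = s - 1 := by
    rw [hy', sum_pair]; simp [h1S₂, hj2]
  have hS2c' : ∑ m ∈ Finset.Icc 1 n \ S₂, y' m = 1 - s := by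
    rw [hy', sum_pair]; simp [Finset.mem_sdiff, h1S₂, hj2, hjI]
  have hw2 : ((fun _ => (0:ℝ)), y) ∈ Hyp g n d i₂ t₂ S₂ k₂ := by
    simp only [Hyp, if_neg ht₂, Set.mem_setOf_eq]
    rw [hS2, hS2c, hs]
    have hG1 : (g : ℝ) - 1 ≠ 0 := fun h => hG (by linarith)
    field_simp [hG1]
    ring
  have hw1 : ((fun _ => (0:ℝ)), y) ∈ Hyp g n d i₁ t₁ S₁ k₁ := hH ▸ hw2
  have hw1' : ((fun _ => (0:ℝ)), y') ∈ Hyp g n d i₁ t₁ S₁ k₁ := by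
    simp only [Hyp, if_neg ht₁, Set.mem_setOf_eq] at hw1 ⊢
    rw [hS1, hS1c] at hw1
    rw [hS1', hS1c']
    exact hw1
  have hw2' : ((fun _ => (0:ℝ)), y') ∈ Hyp g n d i₂ t₂ S₂ k₂ := hH ▸ hw1'
  simp only [Hyp, if_neg ht₂, Set.mem_setOf_eq] at hw2'
  rw [hS2', hS2c', hs] at hw2'
  have h2 : (2 : ℝ) ≤ (g : ℝ) := by exact_mod_cast hg
  have hG1 : (g : ℝ) - 1 ≠ 0 := fun h => hG (by linarith)
  field_simp [hG1] at hw2'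
  nlinarith [hw2']

/-- Mixed case: `t₁ = 1`, `t₂ ≥ 2` is impossible. -/
lemma mixed (g n : ℕ) (d : ℤ) (hg : 2 ≤ g) (i₁ i₂ t₂ : ℕ) (S₁ S₂ : Finset ℕ)
    (k₁ k₂ : ℤ) (ht₂ : t₂ ≠ 1) (h₂ : VineTriple g n i₂ t₂ S₂)
    (hH : Hyp g n d i₁ 1 S₁ k₁ = Hyp g n d i₂ t₂ S₂ k₂) : False := by
  have hG := hG_ne g hg
  obtain ⟨hi₂g, ht₂1, hit₂, hSsub, h1S₂, -, -, -, hlast⟩ := h₂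
  -- any point with first coordinate constantly k₁ + 1/2 lies in H₁
  have hmem : ∀ y : ℕ → ℝ,
      ((fun _ => (k₁ : ℝ) + 1/2), y) ∈ Hyp g n d i₂ t₂ S₂ k₂ := by
    intro y
    rw [← hH]
    simp [Hyp]
  -- single-coordinate bump at marking m with value u
  have heq : ∀ (m : ℕ) (u : ℝ),
      ((2 * (g : ℝ) - 2 * (i₂ : ℝ) - (t₂ : ℝ)) / (2 * (g : ℝ) - 2)) *
          (if m ∈ S₂ then u else 0) +
        ((2 * (i₂ : ℝ) - 2 + (t₂ : ℝ)) / (2 * (g : ℝ) - 2)) *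
          ((d : ℝ) - (if m ∈ Finset.Icc 1 n \ S₂ then u else 0)) =
        (k₂ : ℝ) + (t₂ : ℝ) / 2 := by
    intro m u
    have := hmem (fun p => if p = m then u else 0)
    simp only [Hyp, if_neg ht₂, Set.mem_setOf_eq,
      Finset.sum_ite_eq' S₂ m (fun _ => u),
      Finset.sum_ite_eq' (Finset.Icc 1 n \ S₂) m (fun _ => u)] at this
    exact this
  -- vary y 1 : coefficient a₂ must vanish
  have h1c : 1 ∉ Finset.Icc 1 n \ S₂ := by simp [Finset.mem_sdiff, h1S₂]
  have ha0 : 2 * (g : ℝ) - 2 * (i₂ : ℝ) - (t₂ : ℝ) = 0 := by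
    have e0 := heq 1 0
    have e1 := heq 1 1
    simp only [if_pos h1S₂, if_neg h1c] at e0 e1
    have : ((2 * (g : ℝ) - 2 * (i₂ : ℝ) - (t₂ : ℝ)) / (2 * (g : ℝ) - 2)) = 0 := by
      linear_combination e1 - e0
    rcases div_eq_zero_iff.mp this with h | h
    · exact h
    · exact absurd h hG
  -- hence 2g = 2i₂ + t₂ in ℕ, so i₂ = g - 1 and t₂ = 2
  have hnat : 2 * g = 2 * i₂ + t₂ := by
    have : (2 * g : ℝ) = (2 * i₂ + t₂ : ℕ) := by push_cast; linarith
    exact_mod_cast this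
  have hi : i₂ = g - 1 ∧ t₂ = 2 := by omega
  have hcard := hlast hi
  obtain ⟨j, hjmem⟩ := Finset.card_pos.mp hcard
  have hj2 : j ∉ S₂ := (Finset.mem_sdiff.mp hjmem).2
  -- vary y j : coefficient b₂ must vanish too, contradiction
  have hb0 : 2 * (i₂ : ℝ) - 2 + (t₂ : ℝ) = 0 := by
    have e0 := heq j 0
    have e1 := heq j 1
    simp only [if_pos hjmem, if_neg hj2] at e0 e1
    have : ((2 * (i₂ : ℝ) - 2 + (t₂ : ℝ)) / (2 * (g : ℝ) - 2)) = 0 := by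
      linear_combination e0 - e1
    rcases div_eq_zero_iff.mp this with h | h
    · exact h
    · exact absurd h hG
  have : (2 * (g : ℝ) - 2) = 0 := by linarith
  exact hG this

/-- Proposition: if two stability hyperplanes indexed by vine curve triples
coincide, then the corresponding subsets of markings coincide. -/
theorem hyperplanes_eq_imp_markings_eq (g n : ℕ) (d : ℤ) (hg : 2 ≤ g) (hn : 1 ≤ n)
    (i₁ t₁ i₂ t₂ : ℕ) (S₁ S₂ : Finset ℕ) (k₁ k₂ : ℤ)
    (h₁ : VineTriple g n i₁ t₁ S₁) (h₂ : VineTriple g n i₂ t₂ S₂)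
    (hH : Hyp g n d i₁ t₁ S₁ k₁ = Hyp g n d i₂ t₂ S₂ k₂) :
    S₁ = S₂ := by
  by_cases ht₁ : t₁ = 1 <;> by_cases ht₂ : t₂ = 1
  · -- both t = 1
    subst ht₁ ht₂
    by_contra hne
    have hpair : (i₁, S₁) ≠ (i₂, S₂) := by
      intro h
      exact hne (congrArg Prod.snd h)
    have hne' : (i₂, S₂) ≠ (i₁, S₁) := fun h => hpair h.symm
    have hw1 : ((fun q => if q = (i₁, S₁) then (k₁ : ℝ) + 1/2 else (k₂ : ℝ) + 1/2 + 1,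
        fun _ => (0 : ℝ)) : ((ℕ × Finset ℕ) → ℝ) × (ℕ → ℝ)) ∈ Hyp g n d i₁ 1 S₁ k₁ := by
      simp [Hyp]
    have hw2 : ((fun q => if q = (i₁, S₁) then (k₁ : ℝ) + 1/2 else (k₂ : ℝ) + 1/2 + 1,
        fun _ => (0 : ℝ)) : ((ℕ × Finset ℕ) → ℝ) × (ℕ → ℝ)) ∈ Hyp g n d i₂ 1 S₂ k₂ :=
      hH ▸ hw1
    have hcond : ¬(i₂ = i₁ ∧ S₂ = S₁) := fun h => hne h.2.symm
    have hx2 : ((k₂ : ℝ) + 1/2 + 1) = (k₂ : ℝ) + 1/2 := by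
      simpa [Hyp, hcond] using hw2
    linarith
  · subst ht₁
    exact absurd (mixed g n d hg i₁ i₂ t₂ S₁ S₂ k₁ k₂ ht₂ h₂ hH) id
  · subst ht₂
    exact absurd (mixed g n d hg i₂ i₁ t₁ S₂ S₁ k₂ k₁ ht₁ h₁ hH.symm) id
  · -- both t ≥ 2
    apply Finset.Subset.antisymm
    · intro j hjS₁
      by_contra hjS₂
      exact key g n d hg i₁ t₁ i₂ t₂ S₁ S₂ k₁ k₂ ht₁ ht₂ h₁.2.2.2.2.1 h₂.2.2.2.2.1
        hH j (h₁.2.2.2.1 hjS₁) hjS₁ hjS₂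
    · intro j hjS₂
      by_contra hjS₁
      exact key g n d hg i₂ t₂ i₁ t₁ S₂ S₁ k₂ k₁ ht₂ ht₁ h₂.2.2.2.2.1 h₁.2.2.2.2.1
        hH.symm j (h₂.2.2.2.1 hjS₂) hjS₂ hjS₁

end Paper
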